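/- (Proposition 4.15, computation of Ad_f for the family of curves with extraspecial automorphism group.) Let n ≥ 1, let t_0, …, t_{n−1} ∈ k with t_0 = 0 in case p = 2, set t_n := 1, and let f(X) := Σ_{i=0}^{n} t_i X^{1+p^i}. Then S(f) = {y ∈ k : Σ_{i=0}^{n} ( t_i^{p^{n−i}} y^{p^{n−i}} + t_i^{p^n} y^{p^{n+i}} ) = 0}, and this set has exactly p^{2n} elements; equivalently, |G_{∞,1}(f)| = p^{2n+1}. -/

import Mathlib

open Polynomial Finset

/-- `S(f)`: the set of `y ∈ k` such that `f(X+y) - f(X) - f(y) = P(X) - P(X)^p`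
for some polynomial `P` with `P(0) = 0`. -/
def Sf (p : ℕ) {k : Type*} [Field k] (f : k[X]) : Set k :=
  {y | ∃ P : k[X], P.coeff 0 = 0 ∧
    f.comp (X + C y) - f - C (f.eval y) = P - P ^ p}

section Aux

variable {p : ℕ} {k : Type*} [Field k] [CharP k p]

private lemma coeff_pow_char' (hp : p.Prime) (P : k[X]) (m : ℕ) :
    (P ^ p).coeff m = if p ∣ m then P.coeff (m / p) ^ p else 0 := by
  haveI := Fact.mk hp
  rw [← map_frobenius_expand (p := p) P, coeff_map, coeff_expand hp.pos]
  split_ifs <;> simp [frobenius_def, hp.ne_zero]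

/-- The recursive sequence `a 0 = c 0`, `a (j+1) = c (j+1) + (a j)^p`. -/
private def aSeq (p : ℕ) {k : Type*} [Field k] (c : ℕ → k) : ℕ → k
  | 0 => c 0
  | (j + 1) => c (j + 1) + (aSeq p c j) ^ p

private lemma aSeq_eq (hp : p.Prime) (c : ℕ → k) (m : ℕ) :
    aSeq p c m = ∑ j ∈ range (m + 1), c j ^ p ^ (m - j) := by
  induction m with
  | zero => simp [aSeq]
  | succ m ih =>
      haveI := Fact.mk hp
      rw [aSeq, ih, sum_range_succ _ (m + 1), Nat.sub_self, pow_zero, pow_one,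
        sum_pow_char, add_comm]
      congr 1
      refine Finset.sum_congr rfl fun j hj => ?_
      rw [mem_range, Nat.lt_succ_iff] at hj
      rw [← pow_mul, ← pow_succ, Nat.succ_sub hj]


private lemma wp_iff (hp : p.Prime) (c : ℕ → k) (n : ℕ) :
    (∃ P : k[X], P.coeff 0 = 0 ∧
      (∑ j ∈ range (n + 1), C (c j) * X ^ p ^ j) = P - P ^ p) ↔
    ∑ j ∈ range (n + 1), c j ^ p ^ (n - j) = 0 := by
  haveI := Fact.mk hp
  constructor
  · rintro ⟨P, -, hP⟩
    have hcoeff : ∀ j, (∑ l ∈ range (n + 1), C (c l) * X ^ p ^ l).coeff (p ^ j)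
        = (if j ≤ n then c j else 0) := by
      intro j
      rw [finset_sum_coeff]
      simp_rw [coeff_C_mul, coeff_X_pow]
      split_ifs with hj
      · rw [Finset.sum_eq_single j]
        · simp
        · intro l _ hl
          rw [if_neg (fun h => hl (Nat.pow_right_injective hp.two_le h.symm)), mul_zero]
        · intro h; exact absurd (mem_range.2 (Nat.lt_succ_of_le hj)) h
      · refine Finset.sum_eq_zero fun l hl => ?_
        rw [mem_range, Nat.lt_succ_iff] at hl
        rw [if_neg fun h => hj ((Nat.pow_right_injective hp.two_le h).le.trans hl), mul_zero]
    have hrec : ∀ j, (if j ≤ n then c j else 0)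
        = P.coeff (p ^ j) - (if j = 0 then 0 else P.coeff (p ^ (j - 1)) ^ p) := by
      intro j
      have h := congrArg (fun q => Polynomial.coeff q (p ^ j)) hP
      simp only [coeff_sub] at h
      rw [hcoeff j, coeff_pow_char' hp] at h
      rcases Nat.eq_zero_or_pos j with rfl | hj
      · have hnd : ¬ p ∣ p ^ 0 := by simpa [Nat.dvd_one] using hp.ne_one
        rw [if_neg hnd] at h
        simpa using h
      · have hdiv : p ^ j / p = p ^ (j - 1) := by simpa using Nat.pow_div hj hp.pos
        rw [if_pos (dvd_pow_self p hj.ne'), hdiv] at h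
        rw [h, if_neg hj.ne']
    have haj : ∀ j, j ≤ n → P.coeff (p ^ j) = ∑ l ∈ range (j + 1), c l ^ p ^ (j - l) := by
      intro j
      induction j with
      | zero =>
          intro _
          have h := hrec 0
          rw [if_pos (Nat.zero_le n), if_pos rfl, sub_zero] at h
          simpa using h.symm
      | succ j ih =>
          intro hjn
          have h1 := hrec (j + 1)
          rw [if_pos hjn, if_neg (Nat.succ_ne_zero j), Nat.add_sub_cancel] at h1
          have h2 : P.coeff (p ^ (j + 1)) = c (j + 1) + P.coeff (p ^ j) ^ p := by
            rw [h1]; ring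
          rw [h2, ih (le_of_lt (Nat.lt_of_succ_le hjn)), sum_pow_char,
            sum_range_succ _ (j + 1), Nat.sub_self, pow_zero, pow_one, add_comm]
          congr 1
          refine Finset.sum_congr rfl fun l hl => ?_
          rw [mem_range, Nat.lt_succ_iff] at hl
          rw [← pow_mul, ← pow_succ, Nat.succ_sub hl]
    have hbeyond : ∀ d, P.coeff (p ^ (n + d)) = P.coeff (p ^ n) ^ p ^ d := by
      intro d
      induction d with
      | zero => simp
      | succ d ih =>
          have h1 := hrec (n + d + 1)
          rw [if_neg (by omega), if_neg (Nat.succ_ne_zero _), Nat.add_sub_cancel] at h1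
          have h2 : P.coeff (p ^ (n + d + 1)) = P.coeff (p ^ (n + d)) ^ p :=
            sub_eq_zero.mp h1.symm
          rw [show n + (d + 1) = n + d + 1 from rfl, h2, ih, ← pow_mul, ← pow_succ]
    have hzero : P.coeff (p ^ n) = 0 := by
      have hd : P.coeff (p ^ (n + P.natDegree)) = 0 := by
        refine Polynomial.coeff_eq_zero_of_natDegree_lt ?_
        calc P.natDegree < p ^ P.natDegree := Nat.lt_pow_self hp.one_lt
        _ ≤ p ^ (n + P.natDegree) := Nat.pow_le_pow_right hp.pos (by omega)
      rw [hbeyond] at hd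
      exact pow_eq_zero_iff (pow_pos hp.pos _).ne' |>.mp hd
    rw [← haj n le_rfl]; exact hzero
  · intro h0
    set a : ℕ → k := aSeq p c with ha
    refine ⟨∑ j ∈ range (n + 1), C (a j) * X ^ p ^ j, ?_, ?_⟩
    · rw [finset_sum_coeff]
      refine Finset.sum_eq_zero fun j _ => ?_
      rw [coeff_C_mul, coeff_X_pow, if_neg (pow_pos hp.pos j).ne, mul_zero]
    · have key : ∀ m, ∑ j ∈ range (m + 1), C (c j) * X ^ p ^ j
          = (∑ j ∈ range (m + 1), C (a j) * X ^ p ^ j)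
            - ∑ j ∈ range m, C (a j ^ p) * X ^ p ^ (j + 1) := by
        intro m
        induction m with
        | zero => simp [ha, aSeq]
        | succ m ih =>
            rw [sum_range_succ _ (m + 1), ih, sum_range_succ (fun j => C (a j) * X ^ p ^ j) (m + 1),
              sum_range_succ (fun j => C (a j ^ p) * X ^ p ^ (j + 1)) m]
            have : a (m + 1) = c (m + 1) + a m ^ p := rfl
            rw [this, map_add]
            ring
      have hpow : (∑ j ∈ range (n + 1), C (a j) * X ^ p ^ j) ^ p
          = ∑ j ∈ range (n + 1), C (a j ^ p) * X ^ p ^ (j + 1) := by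
        rw [sum_pow_char]
        refine Finset.sum_congr rfl fun j _ => ?_
        rw [mul_pow, ← map_pow, ← pow_mul, ← pow_succ]
      have han : a n = 0 := by rw [ha, aSeq_eq hp]; exact h0
      rw [key n, hpow, sum_range_succ (fun j => C (a j ^ p) * X ^ p ^ (j + 1)) n, han]
      simp [zero_pow hp.ne_zero]


/-- The coefficient sequence of `f(X+y)-f(X)-f(y)` at `p`-power exponents. -/
private def cf (p : ℕ) {k : Type*} [Field k] (n : ℕ) (t : ℕ → k) (y : k) : ℕ → k := fun j =>
  if j = 0 then t 0 * y + ∑ i ∈ Finset.range (n + 1), t i * y ^ p ^ i else t j * y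

private lemma g_eq (hp : p.Prime) (n : ℕ) (t : ℕ → k) (y : k) :
    (∑ i ∈ range (n + 1), C (t i) * X ^ (1 + p ^ i)).comp (X + C y)
      - (∑ i ∈ range (n + 1), C (t i) * X ^ (1 + p ^ i))
      - C ((∑ i ∈ range (n + 1), C (t i) * X ^ (1 + p ^ i)).eval y)
    = ∑ j ∈ range (n + 1), C (cf p n t y j) * X ^ p ^ j := by
  haveI := Fact.mk hp
  have step1 : (∑ i ∈ range (n + 1), C (t i) * X ^ (1 + p ^ i)).comp (X + C y)
      - (∑ i ∈ range (n + 1), C (t i) * X ^ (1 + p ^ i))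
      - C ((∑ i ∈ range (n + 1), C (t i) * X ^ (1 + p ^ i)).eval y)
      = ∑ i ∈ range (n + 1), (C (t i * y ^ p ^ i) * X + C (t i * y) * X ^ p ^ i) := by
    rw [Polynomial.sum_comp, eval_finset_sum, map_sum, ← Finset.sum_sub_distrib, ← Finset.sum_sub_distrib]
    refine Finset.sum_congr rfl fun i _ => ?_
    rw [mul_comp, C_comp, pow_comp, X_comp, eval_mul, eval_C, eval_pow, eval_X]
    simp only [pow_add, pow_one, add_pow_char_pow, map_mul, map_pow]
    ring
  rw [step1, Finset.sum_add_distrib, ← Finset.sum_mul, ← map_sum,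
    sum_range_succ' (fun i => C (t i * y) * X ^ p ^ i) n,
    sum_range_succ' (fun j => C (cf p n t y j) * X ^ p ^ j) n]
  have hcf0 : cf p n t y 0 = t 0 * y + ∑ i ∈ range (n + 1), t i * y ^ p ^ i := rfl
  have hcfs : ∀ j : ℕ, cf p n t y (j + 1) = t (j + 1) * y := fun j => rfl
  simp only [hcf0, hcfs, pow_zero, pow_one, map_add]
  ring

private lemma sum_c_eq (hp : p.Prime) (n : ℕ) (t : ℕ → k) (y : k) :
    ∑ j ∈ range (n + 1), (cf p n t y j) ^ p ^ (n - j)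
      = ∑ i ∈ range (n + 1),
          (t i ^ p ^ (n - i) * y ^ p ^ (n - i) + t i ^ p ^ n * y ^ p ^ (n + i)) := by
  haveI := Fact.mk hp
  rw [sum_range_succ' (fun j => (cf p n t y j) ^ p ^ (n - j)) n,
    Finset.sum_add_distrib,
    sum_range_succ' (fun i => t i ^ p ^ (n - i) * y ^ p ^ (n - i)) n]
  have h0 : cf p n t y 0 ^ p ^ (n - 0)
      = t 0 ^ p ^ n * y ^ p ^ n + ∑ i ∈ range (n + 1), t i ^ p ^ n * y ^ p ^ (n + i) := by
    have hcf0 : cf p n t y 0 = t 0 * y + ∑ i ∈ range (n + 1), t i * y ^ p ^ i := rfl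
    rw [hcf0, Nat.sub_zero, add_pow_char_pow, sum_pow_char_pow, mul_pow]
    congr 1
    refine Finset.sum_congr rfl fun i _ => ?_
    rw [mul_pow, ← pow_mul, ← pow_add, add_comm i n]
  have h1 : ∀ j ∈ range n,
      cf p n t y (j + 1) ^ p ^ (n - (j + 1)) = t (j + 1) ^ p ^ (n - (j + 1)) * y ^ p ^ (n - (j + 1)) := by
    intro j _
    have : cf p n t y (j + 1) = t (j + 1) * y := rfl
    rw [this, mul_pow]
  rw [h0, Finset.sum_congr rfl h1]
  simp only [Nat.sub_zero]
  ring

end Aux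

/-- Proposition 4.15: for `f = Σ_{i=0}^n t_i X^{1+p^i}` with `t_n = 1` (and `t_0 = 0` if
`p = 2`), the set `S(f)` is the set of roots of the additive polynomial
`Σ_i (t_i^{p^{n-i}} Y^{p^{n-i}} + t_i^{p^n} Y^{p^{n+i}})`, of cardinality `p^{2n}`;
hence `|G_{∞,1}(f)| = p^{2n+1}`. -/
theorem Sf_extraspecial_family (p : ℕ) (hp : p.Prime)
    (k : Type*) [Field k] [IsAlgClosed k] [CharP k p]
    (n : ℕ) (hn : 1 ≤ n) (t : ℕ → k) (htn : t n = 1) (ht0 : p = 2 → t 0 = 0)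
    (f : k[X]) (hf : f = ∑ i ∈ Finset.range (n + 1), C (t i) * X ^ (1 + p ^ i)) :
    Sf p f = {y : k | ∑ i ∈ Finset.range (n + 1),
        (t i ^ p ^ (n - i) * y ^ p ^ (n - i) + t i ^ p ^ n * y ^ p ^ (n + i)) = 0} ∧
    (Sf p f).ncard = p ^ (2 * n) := by
  classical
  haveI := Fact.mk hp
  subst hf
  have hset : Sf p (∑ i ∈ Finset.range (n + 1), C (t i) * X ^ (1 + p ^ i))
      = {y : k | ∑ i ∈ Finset.range (n + 1),
          (t i ^ p ^ (n - i) * y ^ p ^ (n - i) + t i ^ p ^ n * y ^ p ^ (n + i)) = 0} := by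
    ext y
    show (∃ P : k[X], P.coeff 0 = 0 ∧ _) ↔ _
    rw [Set.mem_setOf_eq]
    simp only [Sf, Set.mem_setOf_eq, g_eq hp n t y]
    rw [wp_iff hp, sum_c_eq hp]
  refine ⟨hset, ?_⟩
  rw [hset]
  -- now count roots of the additive polynomial
  set A : k[X] := ∑ i ∈ range (n + 1),
      (C (t i ^ p ^ (n - i)) * X ^ p ^ (n - i) + C (t i ^ p ^ n) * X ^ p ^ (n + i)) with hA
  have heval : ∀ y : k, A.eval y
      = ∑ i ∈ range (n + 1),
          (t i ^ p ^ (n - i) * y ^ p ^ (n - i) + t i ^ p ^ n * y ^ p ^ (n + i)) := by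
    intro y
    rw [hA, eval_finset_sum]
    simp
  have hcast : ∀ e : ℕ, e ≠ 0 → ((p ^ e : ℕ) : k) = 0 := by
    intro e he
    rw [Nat.cast_pow, CharP.cast_eq_zero k p, zero_pow he]
  -- A = X^(p^(2n)) + R  with  deg R < p^(2n)
  set R : k[X] := (∑ i ∈ range (n + 1), C (t i ^ p ^ (n - i)) * X ^ p ^ (n - i))
      + ∑ i ∈ range n, C (t i ^ p ^ n) * X ^ p ^ (n + i) with hR
  have hA2 : A = X ^ p ^ (2 * n) + R := by
    rw [hA, hR, Finset.sum_add_distrib,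
      sum_range_succ (fun i => C (t i ^ p ^ n) * X ^ p ^ (n + i)) n, htn, one_pow, map_one,
      one_mul, show n + n = 2 * n from by ring]
    ring
  have hRdeg : R.degree < ((p ^ (2 * n) : ℕ) : WithBot ℕ) := by
    have hbot : (⊥ : WithBot ℕ) < ((p ^ (2 * n) : ℕ) : WithBot ℕ) := WithBot.bot_lt_coe _
    rw [hR]
    refine lt_of_le_of_lt (degree_add_le _ _) (max_lt ?_ ?_) <;>
      refine lt_of_le_of_lt (degree_sum_le _ _) ((Finset.sup_lt_iff hbot).mpr ?_) <;>
      intro i hi <;> rw [mem_range] at hi <;>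
      refine lt_of_le_of_lt (degree_C_mul_X_pow_le _ _) ?_ <;>
      exact_mod_cast Nat.pow_lt_pow_right hp.one_lt (by omega)
  have hdegX : (X ^ p ^ (2 * n) : k[X]).degree = ((p ^ (2 * n) : ℕ) : WithBot ℕ) :=
    degree_X_pow _
  have hAdeg : A.degree = ((p ^ (2 * n) : ℕ) : WithBot ℕ) := by
    rw [hA2, degree_add_eq_left_of_degree_lt (by rw [hdegX]; exact hRdeg), hdegX]
  have hAne : A ≠ 0 := by
    intro h
    rw [h, degree_zero] at hAdeg
    exact WithBot.bot_ne_coe hAdeg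
  have hAnat : A.natDegree = p ^ (2 * n) := natDegree_eq_of_degree_eq_some hAdeg
  have hderiv : derivative A = 1 := by
    rw [hA, derivative_sum, sum_range_succ]
    rw [Finset.sum_eq_zero, zero_add]
    · simp [htn, Nat.sub_self, hcast (n + n) (by omega), derivative_X_pow]
    · intro i hi
      rw [mem_range] at hi
      simp [derivative_X_pow, hcast (n - i) (by omega), hcast (n + i) (by omega), ← map_pow]
  have hsep : A.Separable := by
    rw [Polynomial.separable_def, hderiv]
    exact isCoprime_one_right
  have hsplits : A.Splits := IsAlgClosed.splits A
  have hrootscard : Multiset.card A.roots = p ^ (2 * n) := by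
    have := hsplits.natDegree_eq_card_roots
    rw [hAnat] at this
    exact this.symm
  have hsetroots : {y : k | ∑ i ∈ Finset.range (n + 1),
      (t i ^ p ^ (n - i) * y ^ p ^ (n - i) + t i ^ p ^ n * y ^ p ^ (n + i)) = 0}
      = ↑A.roots.toFinset := by
    ext y
    simp only [Set.mem_setOf_eq, Finset.coe_sort_coe, Finset.mem_coe, Multiset.mem_toFinset,
      mem_roots', IsRoot, heval]
    exact ⟨fun h => ⟨hAne, h⟩, fun h => h.2⟩
  rw [hsetroots, Set.ncard_coe_finset, Multiset.toFinset_card_of_nodup (nodup_roots hsep),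
    hrootscard]
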